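/- (Module-level form of the paper's lemma that n-exact sequences in an n-cluster tilting subcategory are exact.) Let k be a field, Λ a finite-dimensional k-algebra, and M₀ a finitely generated Λ-module such that Λ (as a left module over itself) belongs to add(M₀) and every finitely generated injective Λ-module belongs to add(M₀). Let n ≥ 1 and let 0 → m_{n+1} →μ_{n+1} m_n → ⋯ →μ₁ m₀ → 0 be a complex of modules with all m_i ∈ add(M₀) such that for every X ∈ add(M₀) both induced complexes 0 → Hom_Λ(X, m_{n+1}) → ⋯ → Hom_Λ(X, m₁) → Hom_Λ(X, m₀) and 0 → Hom_Λ(m₀, X) → ⋯ → Hom_Λ(m_n, X) → Hom_Λ(m_{n+1}, X) are exact. Then the sequence 0 → m_{n+1} → ⋯ → m₀ → 0 is an exact sequence of Λ-modules (in particular μ_{n+1} is injective and μ₁ is surjective). -/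

import Mathlib

section DualMod

variable (k Λ : Type) [Field k] [Ring Λ] [Algebra k Λ]

/-- Right multiplication by `a`, as a `k`-linear map. -/
def rmulMap (a : Λ) : Λ →ₗ[k] Λ where
  toFun x := x * a
  map_add' x y := add_mul x y a
  map_smul' c x := by simp [smul_mul_assoc]

/-- `Hom_k(Λ, k)` viewed as a left `Λ`-module via right multiplication. -/
def DualMod : Type := Λ →ₗ[k] k

/-- Interpret an element of `DualMod` as a linear map. -/
def DualMod.out (f : DualMod k Λ) : Λ →ₗ[k] k := f

/-- Build an element of `DualMod` from a linear map. -/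
def DualMod.mk (f : Λ →ₗ[k] k) : DualMod k Λ := f

instance : AddCommGroup (DualMod k Λ) := inferInstanceAs (AddCommGroup (Λ →ₗ[k] k))
instance : Module k (DualMod k Λ) := inferInstanceAs (Module k (Λ →ₗ[k] k))

lemma DualMod.ext {f g : DualMod k Λ} (h : ∀ x, DualMod.out k Λ f x = DualMod.out k Λ g x) :
    f = g := LinearMap.ext h

instance : SMul Λ (DualMod k Λ) :=
  ⟨fun a f => DualMod.mk k Λ ((DualMod.out k Λ f).comp (rmulMap k Λ a))⟩

lemma DualMod.out_smul (a : Λ) (f : DualMod k Λ) (x : Λ) :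
    DualMod.out k Λ (a • f) x = DualMod.out k Λ f (x * a) := rfl

lemma DualMod.out_add (f g : DualMod k Λ) (x : Λ) :
    DualMod.out k Λ (f + g) x = DualMod.out k Λ f x + DualMod.out k Λ g x := rfl

lemma DualMod.out_zero (x : Λ) : DualMod.out k Λ (0 : DualMod k Λ) x = 0 := rfl

lemma DualMod.out_ksmul (c : k) (f : DualMod k Λ) (x : Λ) :
    DualMod.out k Λ (c • f) x = c • DualMod.out k Λ f x := rfl

instance : Module Λ (DualMod k Λ) where
  one_smul f := DualMod.ext k Λ fun x => by rw [DualMod.out_smul, mul_one]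
  mul_smul a b f := DualMod.ext k Λ fun x => by
    rw [DualMod.out_smul, DualMod.out_smul, DualMod.out_smul, mul_assoc]
  smul_zero a := DualMod.ext k Λ fun x => by rw [DualMod.out_smul, DualMod.out_zero,
    DualMod.out_zero]
  smul_add a f g := DualMod.ext k Λ fun x => by
    rw [DualMod.out_smul, DualMod.out_add, DualMod.out_add, DualMod.out_smul, DualMod.out_smul]
  add_smul a b f := DualMod.ext k Λ fun x => by
    rw [DualMod.out_smul, DualMod.out_add, DualMod.out_smul, DualMod.out_smul, mul_add, map_add]
  zero_smul f := DualMod.ext k Λ fun x => by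
    rw [DualMod.out_smul, DualMod.out_zero, mul_zero, map_zero]

instance : IsScalarTower k Λ (DualMod k Λ) := by
  refine ⟨fun c a f => DualMod.ext k Λ fun x => ?_⟩
  rw [DualMod.out_smul, DualMod.out_ksmul, DualMod.out_smul, Algebra.smul_def,
    show x * (algebraMap k Λ c * a) = c • (x * a) by
      rw [Algebra.smul_def, ← mul_assoc, ← Algebra.commutes c x, mul_assoc],
    map_smul]

instance [FiniteDimensional k Λ] : Module.Finite k (DualMod k Λ) :=
  inferInstanceAs (Module.Finite k (Λ →ₗ[k] k))

instance [FiniteDimensional k Λ] : Module.Finite Λ (DualMod k Λ) :=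
  Module.Finite.of_restrictScalars_finite k Λ _

variable {Y : Type} [AddCommGroup Y] [Module k Y] [Module Λ Y] [IsScalarTower k Λ Y]

/-- Given a family of `k`-linear functionals on a `Λ`-module `Y`, build a `Λ`-linear map
from `Y` to a finite power of `DualMod`. -/
def ofDualFamily {d : ℕ} (φ : Fin d → (Y →ₗ[k] k)) : Y →ₗ[Λ] (Fin d → DualMod k Λ) where
  toFun y := fun j => DualMod.mk k Λ
    { toFun := fun x => φ j (x • y)
      map_add' := fun x x' => by
        show φ j ((x + x') • y) = φ j (x • y) + φ j (x' • y)
        rw [add_smul, map_add]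
      map_smul' := fun c x => by
        show φ j ((c • x) • y) = c • φ j (x • y)
        rw [smul_assoc, map_smul] }
  map_add' y y' := by
    funext j
    refine DualMod.ext k Λ fun x => ?_
    show φ j (x • (y + y')) = φ j (x • y) + φ j (x • y')
    rw [smul_add, map_add]
  map_smul' a y := by
    funext j
    refine DualMod.ext k Λ fun x => ?_
    show φ j (x • (a • y)) = φ j ((x * a) • y)
    rw [mul_smul]

lemma ofDualFamily_out {d : ℕ} (φ : Fin d → (Y →ₗ[k] k)) (y : Y) (j : Fin d) (x : Λ) :
    DualMod.out k Λ (ofDualFamily k Λ φ y j) x = φ j (x • y) := rfl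

lemma ofDualFamily_injective {d : ℕ} (φ : Fin d → (Y →ₗ[k] k))
    (h : ∀ y, (∀ j, φ j y = 0) → y = 0) : Function.Injective (ofDualFamily k Λ φ) := by
  intro y y' hyy'
  have key : ∀ j, φ j (y - y') = 0 := by
    intro j
    have := congrArg (fun F => DualMod.out k Λ (F j) 1) hyy'
    simp only [ofDualFamily_out, one_smul] at this
    rw [map_sub, this, sub_self]
  have := h _ key
  exact sub_eq_zero.mp this

/-- A finite power of `DualMod` is an injective `Λ`-module. -/
theorem dualPi_injective (d : ℕ) : Module.Injective Λ (Fin d → DualMod k Λ) := by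
  constructor
  intro X Y' _ _ _ _ f hf g
  letI : Module k X := Module.compHom X (algebraMap k Λ)
  letI : Module k Y' := Module.compHom Y' (algebraMap k Λ)
  haveI : IsScalarTower k Λ X :=
    ⟨fun c a x => by rw [Algebra.smul_def, mul_smul]; rfl⟩
  haveI : IsScalarTower k Λ Y' :=
    ⟨fun c a x => by rw [Algebra.smul_def, mul_smul]; rfl⟩
  -- `f` as a `k`-linear map
  let fk : X →ₗ[k] Y' :=
    { toFun := f
      map_add' := map_add f
      map_smul' := fun c x => by
        show f (algebraMap k Λ c • x) = algebraMap k Λ c • f x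
        exact map_smul f _ x }
  have hker : LinearMap.ker fk = ⊥ := LinearMap.ker_eq_bot.mpr hf
  obtain ⟨r, hr⟩ := fk.exists_leftInverse_of_injective hker
  -- the functionals on `X` corresponding to `g`
  let φ : Fin d → (X →ₗ[k] k) := fun j =>
    { toFun := fun x => DualMod.out k Λ (g x j) 1
      map_add' := fun x x' => by
        show DualMod.out k Λ (g (x + x') j) 1 =
          DualMod.out k Λ (g x j) 1 + DualMod.out k Λ (g x' j) 1
        rw [map_add]; rfl
      map_smul' := fun c x => by
        show DualMod.out k Λ (g (algebraMap k Λ c • x) j) 1 = c • DualMod.out k Λ (g x j) 1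
        rw [map_smul g]
        show DualMod.out k Λ (g x j) (1 * algebraMap k Λ c) = c • DualMod.out k Λ (g x j) 1
        rw [one_mul, Algebra.algebraMap_eq_smul_one, map_smul] }
  refine ⟨ofDualFamily k Λ (fun j => (φ j).comp r), fun x => ?_⟩
  funext j
  refine DualMod.ext k Λ fun x' => ?_
  rw [ofDualFamily_out]
  show φ j (r (x' • f x)) = DualMod.out k Λ (g x j) x'
  rw [show x' • f x = fk (x' • x) from (map_smul f x' x).symm,
    show r (fk (x' • x)) = x' • x from LinearMap.congr_fun hr (x' • x)]
  show DualMod.out k Λ (g (x' • x) j) 1 = DualMod.out k Λ (g x j) x'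
  rw [map_smul g]
  show DualMod.out k Λ (g x j) (1 * x') = DualMod.out k Λ (g x j) x'
  rw [one_mul]

end DualMod

/-- `N` belongs to `add M₀`: `N` is (isomorphic to) a direct summand of a finite
direct sum `M₀^{⊕ d}` of copies of `M₀`. -/
def MemAdd (Λ : Type*) [Ring Λ] (M₀ : Type*) [AddCommGroup M₀] [Module Λ M₀]
    (N : Type*) [AddCommGroup N] [Module Λ N] : Prop :=
  ∃ (d : ℕ) (s : N →ₗ[Λ] (Fin d → M₀)) (r : (Fin d → M₀) →ₗ[Λ] N),
    r ∘ₗ s = LinearMap.id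

/-- Module-level form of the lemma that `n`-exact sequences in an `n`-cluster
tilting subcategory are exact: if `Λ ∈ add M₀`, every finitely generated
injective module is in `add M₀`, and `0 → m_{n+1} →μ_{n+1} ⋯ →μ₁ m₀ → 0` is a
complex in `add M₀` all of whose induced `Hom`-complexes into and out of objects
of `add M₀` are exact, then the sequence is exact as a sequence of `Λ`-modules.
(Here `μ i : m (i+1) →ₗ m i` is the paper's `μ_{i+1}`.) -/
theorem n_exact_sequence_is_exact
    (k : Type) [Field k] (Λ : Type) [Ring Λ] [Algebra k Λ] [FiniteDimensional k Λ]
    (M₀ : Type) [AddCommGroup M₀] [Module Λ M₀] [Module.Finite Λ M₀]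
    -- `Λ` belongs to `add M₀`
    (hΛ : MemAdd Λ M₀ Λ)
    -- every finitely generated injective module belongs to `add M₀`
    (hinj : ∀ (I : Type) [AddCommGroup I] [Module Λ I],
      Module.Finite Λ I → Module.Injective Λ I → MemAdd Λ M₀ I)
    (n : ℕ) (hn : 1 ≤ n)
    (m : ℕ → Type) [∀ i, AddCommGroup (m i)] [∀ i, Module Λ (m i)]
    (hm : ∀ i, i ≤ n + 1 → MemAdd Λ M₀ (m i))
    (μ : ∀ i, m (i + 1) →ₗ[Λ] m i)
    -- the sequence is a complex
    (hcplx : ∀ i, i < n → (μ i) ∘ₗ (μ (i + 1)) = 0)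
    -- for every `X ∈ add M₀`, the complex
    -- `0 → Hom(X, m_{n+1}) → ⋯ → Hom(X, m₁) → Hom(X, m₀)` is exact
    (hcov : ∀ (X : Type) [AddCommGroup X] [Module Λ X], MemAdd Λ M₀ X →
      Function.Injective (fun f : X →ₗ[Λ] m (n + 1) => (μ n) ∘ₗ f) ∧
      ∀ i, i < n →
        Function.Exact (fun f : X →ₗ[Λ] m (i + 2) => (μ (i + 1)) ∘ₗ f)
          (fun f : X →ₗ[Λ] m (i + 1) => (μ i) ∘ₗ f))
    -- for every `X ∈ add M₀`, the complex
    -- `0 → Hom(m₀, X) → ⋯ → Hom(m_n, X) → Hom(m_{n+1}, X)` is exact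
    (hcontra : ∀ (X : Type) [AddCommGroup X] [Module Λ X], MemAdd Λ M₀ X →
      Function.Injective (fun g : m 0 →ₗ[Λ] X => g ∘ₗ (μ 0)) ∧
      ∀ i, i < n →
        Function.Exact (fun g : m i →ₗ[Λ] X => g ∘ₗ (μ i))
          (fun g : m (i + 1) →ₗ[Λ] X => g ∘ₗ (μ (i + 1)))) :
    Function.Injective (μ n) ∧
    Function.Surjective (μ 0) ∧
    ∀ i, i < n → Function.Exact (μ (i + 1)) (μ i) := by
  obtain ⟨hc1, hc2⟩ := hcov Λ hΛ
  refine ⟨?_, ?_, ?_⟩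
  · -- injectivity of `μ n`, via `Hom(Λ, -)`
    intro x y hxy
    have hx : (fun f : Λ →ₗ[Λ] m (n + 1) => (μ n) ∘ₗ f)
        (LinearMap.toSpanSingleton Λ (m (n + 1)) x) =
        (fun f : Λ →ₗ[Λ] m (n + 1) => (μ n) ∘ₗ f)
        (LinearMap.toSpanSingleton Λ (m (n + 1)) y) := by
      refine LinearMap.ext fun a => ?_
      simp only [LinearMap.comp_apply, LinearMap.toSpanSingleton_apply, map_smul, hxy]
    have := LinearMap.congr_fun (hc1 hx) 1
    simpa using this
  · -- surjectivity of `μ 0`, via embedding the cokernel into a f.g. injective module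
    set p : Submodule Λ (m 0) := LinearMap.range (μ 0) with hp
    have hmfin : Module.Finite Λ (m 0) := by
      obtain ⟨d, s, r, hrs⟩ := hm 0 (by omega)
      exact Module.Finite.of_surjective r fun x => ⟨s x, LinearMap.congr_fun hrs x⟩
    haveI : Module.Finite Λ (m 0 ⧸ p) :=
      Module.Finite.of_surjective p.mkQ (Submodule.mkQ_surjective p)
    letI : Module k (m 0 ⧸ p) := Module.compHom _ (algebraMap k Λ)
    haveI : IsScalarTower k Λ (m 0 ⧸ p) :=
      ⟨fun c a x => by rw [Algebra.smul_def, mul_smul]; rfl⟩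
    haveI hqf : Module.Finite k (m 0 ⧸ p) := Module.Finite.trans Λ _
    haveI : FiniteDimensional k (m 0 ⧸ p) := hqf
    set d := Module.finrank k (m 0 ⧸ p) with hd
    let b : Module.Basis (Fin d) k (m 0 ⧸ p) := Module.finBasis k _
    let e : (m 0 ⧸ p) →ₗ[Λ] (Fin d → DualMod k Λ) := ofDualFamily k Λ (fun j => b.coord j)
    have he : Function.Injective e :=
      ofDualFamily_injective k Λ _ (fun y hy => b.forall_coord_eq_zero_iff.mp hy)
    have hmem : MemAdd Λ M₀ (Fin d → DualMod k Λ) :=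
      hinj _ inferInstance (dualPi_injective k Λ d)
    obtain ⟨hinjc, -⟩ := hcontra _ hmem
    have h0 : (fun g : m 0 →ₗ[Λ] (Fin d → DualMod k Λ) => g ∘ₗ (μ 0)) (e ∘ₗ p.mkQ) =
        (fun g : m 0 →ₗ[Λ] (Fin d → DualMod k Λ) => g ∘ₗ (μ 0)) 0 := by
      refine LinearMap.ext fun x => ?_
      have hx : p.mkQ ((μ 0) x) = 0 := by
        rw [Submodule.mkQ_apply, Submodule.Quotient.mk_eq_zero]
        exact ⟨x, rfl⟩
      simp only [LinearMap.comp_apply, LinearMap.zero_apply, hx, map_zero]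
    have h1 : e ∘ₗ p.mkQ = 0 := hinjc h0
    intro y
    have hy0 : p.mkQ y = 0 := by
      have := LinearMap.congr_fun h1 y
      simp only [LinearMap.comp_apply, LinearMap.zero_apply] at this
      exact he (by rw [this, map_zero])
    have hy : y ∈ p := by
      rwa [Submodule.mkQ_apply, Submodule.Quotient.mk_eq_zero] at hy0
    exact hy
  · -- exactness in the middle, via `Hom(Λ, -)`
    intro i hi y
    constructor
    · intro hy
      have h0 : (fun f : Λ →ₗ[Λ] m (i + 1) => (μ i) ∘ₗ f)
          (LinearMap.toSpanSingleton Λ (m (i + 1)) y) = 0 := by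
        refine LinearMap.ext fun a => ?_
        simp only [LinearMap.comp_apply, LinearMap.toSpanSingleton_apply, map_smul, hy,
          smul_zero, LinearMap.zero_apply]
      obtain ⟨g, hg⟩ := (hc2 i hi _).mp h0
      refine ⟨g 1, ?_⟩
      have := LinearMap.congr_fun hg 1
      simpa using this
    · rintro ⟨x, rfl⟩
      exact LinearMap.congr_fun (hcplx i hi) x
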